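/- arXiv:1006.5545 — 3 statements merged into one kernel-verified Lean document; each statement's English description precedes it below -/
import Mathlib

section
/- If Z is a Poisson random variable with mean λ > 0, then the total variation distance between the distributions of Z and Z+1 satisfies d_TV(Z, Z+1) ≤ 1/√(2eλ). -/
open Real

lemma log_le_sinh (y : ℝ) (hy : 1 ≤ y) : Real.log y ≤ (y - 1/y)/2 := by
  have h0 : (0:ℝ) < y := lt_of_lt_of_le one_pos hy
  have h1 : 0 ≤ Real.log y := Real.log_nonneg hy
  have := (Real.self_le_sinh_iff).2 h1
  calc Real.log y ≤ Real.sinh (Real.log y) := this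
    _ = (y - 1/y)/2 := by
        rw [Real.sinh_eq, Real.exp_log h0, Real.exp_neg, Real.exp_log h0]
        ring

lemma key_x (x : ℝ) (h0 : 0 ≤ x) (h1 : x < 1) :
    (1+x)*Real.log (1+x) - (1-x)*Real.log (1-x) ≤ 2*x := by
  have hx1 : (0:ℝ) < 1 - x := by linarith
  have A : (1+x)*Real.log (1+x) ≤ x + x^2/2 := by
    have := log_le_sinh (1+x) (by linarith)
    calc (1+x)*Real.log (1+x) ≤ (1+x)*(((1+x) - 1/(1+x))/2) := by
          apply mul_le_mul_of_nonneg_left this (by linarith)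
      _ = x + x^2/2 := by field_simp; ring
  have B : -((1-x)*Real.log (1-x)) ≤ x - x^2/2 := by
    have hy : 1 ≤ 1/(1-x) := one_le_one_div hx1 (by linarith)
    have := log_le_sinh (1/(1-x)) hy
    have hlog : Real.log (1/(1-x)) = -Real.log (1-x) := by
      rw [one_div, Real.log_inv]
    rw [hlog] at this
    have h2 : -((1-x)*Real.log (1-x)) = (1-x) * (-Real.log (1-x)) := by ring
    rw [h2]
    calc (1-x) * (-Real.log (1-x)) ≤ (1-x) * ((1/(1-x) - 1/(1/(1-x)))/2) :=
          mul_le_mul_of_nonneg_left this hx1.le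
      _ = x - x^2/2 := by field_simp; ring
  linarith

lemma stirling_half (m : ℕ) :
    Real.sqrt 2 * ((m:ℝ) + 1/2) ^ ((m:ℝ) + 1/2) * Real.exp (-(m:ℝ)) ≤ m.factorial := by
  induction m with
  | zero =>
    simp only [Nat.cast_zero, Nat.factorial_zero, Nat.cast_one]
    rw [zero_add, ← Real.sqrt_eq_rpow]
    rw [← Real.sqrt_mul (by norm_num : (0:ℝ) ≤ 2)]
    norm_num
  | succ m ih =>
    have u : ℝ := (m:ℝ) + 1
    set c : ℝ := (m:ℝ) + 1/2 with hc
    set d : ℝ := (m:ℝ) + 3/2 with hd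
    have hu1 : (1:ℝ) ≤ (m:ℝ) + 1 := by linarith [Nat.cast_nonneg (α := ℝ) m]
    have hu0 : (0:ℝ) < (m:ℝ) + 1 := by positivity
    have hc0 : (0:ℝ) < c := by rw [hc]; positivity
    have hd0 : (0:ℝ) < d := by rw [hd]; positivity
    set x : ℝ := 1/(2*((m:ℝ)+1)) with hx
    have hx0 : 0 ≤ x := by rw [hx]; positivity
    have hx1 : x < 1 := by
      rw [hx]
      rw [div_lt_one (by positivity)]; linarith
    have hkey := key_x x hx0 hx1
    have hdu : d = ((m:ℝ)+1) * (1+x) := by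
      rw [hd, hx]; field_simp; ring
    have hcu : c = ((m:ℝ)+1) * (1-x) := by
      rw [hc, hx]; field_simp; ring
    have h1x : (0:ℝ) < 1 + x := by linarith
    have h1x' : (0:ℝ) < 1 - x := by linarith
    have hlogd : Real.log d = Real.log ((m:ℝ)+1) + Real.log (1+x) := by
      rw [hdu, Real.log_mul hu0.ne' h1x.ne']
    have hlogc : Real.log c = Real.log ((m:ℝ)+1) + Real.log (1-x) := by
      rw [hcu, Real.log_mul hu0.ne' h1x'.ne']
    -- main log inequality
    have hmain : d * Real.log d ≤ 1 + Real.log ((m:ℝ)+1) + c * Real.log c := by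
      have hmul : ((m:ℝ)+1) * ((1+x)*Real.log (1+x) - (1-x)*Real.log (1-x))
          ≤ ((m:ℝ)+1) * (2*x) := mul_le_mul_of_nonneg_left hkey hu0.le
      have h2x : ((m:ℝ)+1) * (2*x) = 1 := by rw [hx]; field_simp
      have expand : d * Real.log d - c * Real.log c
          = (((m:ℝ)+1)*(2*x)) * Real.log ((m:ℝ)+1)
            + ((m:ℝ)+1) * ((1+x)*Real.log (1+x) - (1-x)*Real.log (1-x)) := by
        rw [hlogd, hlogc, hdu, hcu]; ring
      rw [h2x] at expand hmul
      linarith [hmul, expand]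
    -- exponentiate
    have hexp : d ^ d ≤ Real.exp 1 * (((m:ℝ)+1) * c ^ c) := by
      rw [Real.rpow_def_of_pos hd0, Real.rpow_def_of_pos hc0,
        mul_comm (Real.log d) d, mul_comm (Real.log c) c]
      calc Real.exp (d * Real.log d)
          ≤ Real.exp (1 + Real.log ((m:ℝ)+1) + c * Real.log c) := Real.exp_le_exp.2 hmain
        _ = Real.exp 1 * (((m:ℝ)+1) * Real.exp (c * Real.log c)) := by
            rw [Real.exp_add, Real.exp_add, Real.exp_log hu0]; ring
    have hfac : ((m+1).factorial : ℝ) = ((m:ℝ)+1) * m.factorial := by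
      rw [Nat.factorial_succ]; push_cast; ring
    have goalcast : ((m+1:ℕ):ℝ) + 1/2 = d := by rw [hd]; push_cast; ring
    rw [goalcast, hfac]
    have hexpm : Real.exp 1 * Real.exp (-(((m+1):ℕ):ℝ)) = Real.exp (-(m:ℝ)) := by
      rw [← Real.exp_add]; push_cast; ring_nf
    calc Real.sqrt 2 * d ^ d * Real.exp (-(((m+1):ℕ):ℝ))
        ≤ Real.sqrt 2 * (Real.exp 1 * (((m:ℝ)+1) * c ^ c)) * Real.exp (-(((m+1):ℕ):ℝ)) := by
          apply mul_le_mul_of_nonneg_right _ (Real.exp_pos _).le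
          exact mul_le_mul_of_nonneg_left hexp (Real.sqrt_nonneg 2)
      _ = ((m:ℝ)+1) * (Real.sqrt 2 * c ^ c * (Real.exp 1 * Real.exp (-(((m+1):ℕ):ℝ)))) := by
          ring
      _ = ((m:ℝ)+1) * (Real.sqrt 2 * c ^ c * Real.exp (-(m:ℝ))) := by rw [hexpm]
      _ ≤ ((m:ℝ)+1) * m.factorial := by
          apply mul_le_mul_of_nonneg_left _ hu0.le
          exact ih

lemma peak_bound {c y : ℝ} (hc : 0 < c) (hy : 0 < y) :
    y ^ c * Real.exp (-y) ≤ c ^ c * Real.exp (-c) := by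
  rw [Real.rpow_def_of_pos hy, Real.rpow_def_of_pos hc, ← Real.exp_add, ← Real.exp_add]
  apply Real.exp_le_exp.2
  have h := Real.log_le_sub_one_of_pos (x := y/c) (by positivity)
  have hlog : Real.log (y/c) = Real.log y - Real.log c := Real.log_div hy.ne' hc.ne'
  rw [hlog] at h
  have := mul_le_mul_of_nonneg_left h hc.le
  have hcy : c * (y/c - 1) = y - c := by field_simp
  nlinarith [this]

lemma pmf_bound (k : ℕ) {lam : ℝ} (hlam : 0 < lam) :
    Real.exp (-lam) * lam ^ k / (Nat.factorial k) ≤ 1 / Real.sqrt (2 * Real.exp 1 * lam) := by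
  have hs : 0 < Real.sqrt (2 * Real.exp 1 * lam) := Real.sqrt_pos.2 (by positivity)
  rw [le_div_iff₀ hs]
  -- goal: exp(-lam)*lam^k/k! * sqrt(2*e*lam) ≤ 1
  have hc : (0:ℝ) < (k:ℝ) + 1/2 := by positivity
  have hsplit : Real.sqrt (2 * Real.exp 1 * lam)
      = Real.sqrt 2 * Real.exp (1/2) * Real.sqrt lam := by
    rw [Real.sqrt_mul (by positivity), Real.sqrt_mul (by norm_num), ← Real.exp_half]
  have hlampow : lam ^ k * Real.sqrt lam = lam ^ ((k:ℝ) + 1/2) := by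
    rw [Real.sqrt_eq_rpow, ← Real.rpow_natCast lam k, ← Real.rpow_add hlam]
  have hpeak := peak_bound hc hlam
  have hst := stirling_half k
  have hfacpos : (0:ℝ) < k.factorial := by positivity
  -- massage
  have expand : Real.exp (-lam) * lam ^ k / (Nat.factorial k) * Real.sqrt (2 * Real.exp 1 * lam)
      = (lam ^ ((k:ℝ) + 1/2) * Real.exp (-lam)) * (Real.sqrt 2 * Real.exp (1/2)) / k.factorial := by
    rw [hsplit, ← hlampow]; ring
  rw [expand, div_le_one hfacpos]
  calc (lam ^ ((k:ℝ) + 1/2) * Real.exp (-lam)) * (Real.sqrt 2 * Real.exp (1/2))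
      ≤ (((k:ℝ)+1/2) ^ ((k:ℝ)+1/2) * Real.exp (-((k:ℝ)+1/2))) * (Real.sqrt 2 * Real.exp (1/2)) := by
        apply mul_le_mul_of_nonneg_right hpeak (by positivity)
    _ = Real.sqrt 2 * ((k:ℝ)+1/2) ^ ((k:ℝ)+1/2) * Real.exp (-(k:ℝ)) := by
        have h : Real.exp (-((k:ℝ)+1/2)) * Real.exp (1/2) = Real.exp (-(k:ℝ)) := by
          rw [← Real.exp_add]; norm_num
        linear_combination (Real.sqrt 2 * ((k:ℝ)+1/2) ^ ((k:ℝ)+1/2)) * h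
    _ ≤ k.factorial := hst
open MeasureTheory

lemma map_apply_toReal {Ω : Type*} [MeasurableSpace Ω] (P : Measure Ω) [IsFiniteMeasure P]
    (f : Ω → ℕ) (hf : Measurable f) (A : Set ℕ) :
    ((P.map f) A).toReal = ∑' k : ℕ, A.indicator (fun k => (P (f ⁻¹' {k})).toReal) k := by
  have hA : MeasurableSet A := trivial
  rw [Measure.map_apply hf hA]
  have hun : f ⁻¹' A = ⋃ k ∈ A, f ⁻¹' {k} := by
    ext ω; simp
  rw [hun, measure_biUnion A.to_countable ?hd (fun k _ => hf (measurableSet_singleton k))]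
  case hd =>
    intro i _ j _ hij
    exact Set.disjoint_left.2 fun ω h1 h2 => hij (by
      simp only [Set.mem_preimage, Set.mem_singleton_iff] at h1 h2
      rw [← h1, ← h2])
  rw [ENNReal.tsum_toReal_eq (fun k => measure_ne_top P _)]
  exact (tsum_subtype A fun k => (P (f ⁻¹' {k})).toReal)

open MeasureTheory ProbabilityTheory

/-- Total variation distance between two distributions on ℤ₊. -/
noncomputable def dTV (μ ν : Measure ℕ) : ℝ :=
  ⨆ A : Set ℕ, |(μ A).toReal - (ν A).toReal|

/-- If Z is Poisson with mean λ > 0, then d_TV(Z, Z+1) ≤ 1/√(2eλ). -/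
theorem poisson_shift_dTV_bound
    {Ω : Type*} [MeasurableSpace Ω] (P : Measure Ω) [IsProbabilityMeasure P]
    (lam : ℝ) (hlam : 0 < lam) (Z : Ω → ℕ) (hZ : Measurable Z)
    (hpois : ∀ k : ℕ, (P (Z ⁻¹' {k})).toReal =
      Real.exp (-lam) * lam ^ k / (Nat.factorial k)) :
    dTV (P.map Z) (P.map (fun ω => Z ω + 1)) ≤
      1 / Real.sqrt (2 * Real.exp 1 * lam) := by
  classical
  set p : ℕ → ℝ := fun k => Real.exp (-lam) * lam ^ k / (Nat.factorial k) with hp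
  set q : ℕ → ℝ := fun k => if k = 0 then 0 else p (k-1) with hq
  set m : ℕ := Nat.floor lam with hm
  have hppos : ∀ k, 0 < p k := fun k => by
    rw [hp]
    have : (0:ℝ) < (Nat.factorial k : ℝ) := by positivity
    positivity
  have hpsum : Summable p := by
    simpa [hp, mul_div_assoc] using
      (Real.summable_pow_div_factorial lam).mul_left (Real.exp (-lam))
  have hq1 : ∀ n : ℕ, q (n+1) = p n := fun n => by simp [hq]
  have hq0 : q 0 = 0 := by simp [hq]
  have hqsum : Summable q := by
    apply (summable_nat_add_iff 1).1
    simpa only [hq1] using hpsum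
  set d : ℕ → ℝ := fun k => p k - q k with hd
  have hdsum : Summable d := hpsum.sub hqsum
  have htd : ∑' k, d k = 0 := by
    have h0 : ∑' k, q k = ∑' k, p k := by
      rw [Summable.tsum_eq_zero_add hqsum, hq0]
      simp only [hq1, zero_add]
    rw [hd]
    rw [Summable.tsum_sub hpsum hqsum, h0, sub_self]
  have hstep : ∀ n : ℕ, p (n+1) - p n = p n * ((lam - ((n:ℝ)+1)) / ((n:ℝ)+1)) := by
    intro n
    have hfac : ((Nat.factorial n : ℝ)) ≠ 0 := by positivity
    have hn1 : ((n:ℝ)+1) ≠ 0 := by positivity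
    rw [hp]
    simp only [Nat.factorial_succ]
    push_cast
    field_simp
    ring
  have hsign_pos : ∀ k, k ≤ m → 0 ≤ d k := by
    intro k hk
    match k with
    | 0 => simpa [hd, hq0] using (hppos 0).le
    | (n+1) =>
      have hle : ((n:ℝ)+1) ≤ lam := by
        have := (Nat.le_floor_iff hlam.le).1 (hm ▸ hk)
        push_cast at this
        linarith
      have : d (n+1) = p n * ((lam - ((n:ℝ)+1)) / ((n:ℝ)+1)) := by
        rw [hd]; simp only [hq1]; exact hstep n
      rw [this]
      apply mul_nonneg (hppos n).le
      apply div_nonneg (by linarith) (by positivity)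
  have hsign_neg : ∀ k, m < k → d k ≤ 0 := by
    intro k hk
    match k with
    | 0 => exact absurd hk (by simp)
    | (n+1) =>
      have hgt : lam < (n:ℝ)+1 := by
        have := (Nat.floor_lt hlam.le).1 (hm ▸ hk)
        push_cast at this
        linarith
      have : d (n+1) = p n * ((lam - ((n:ℝ)+1)) / ((n:ℝ)+1)) := by
        rw [hd]; simp only [hq1]; exact hstep n
      rw [this]
      apply mul_nonpos_of_nonneg_of_nonpos (hppos n).le
      apply div_nonpos_of_nonpos_of_nonneg (by linarith) (by positivity)
  have htel : ∀ n : ℕ, ∑ k ∈ Finset.range (n+1), d k = p n := by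
    intro n
    induction n with
    | zero => simp [hd, hq0]
    | succ n ih =>
      rw [Finset.sum_range_succ, ih, hd]
      simp only [hq1]
      ring
  set S : Set ℕ := {k | k ≤ m} with hS
  have hSind : ∑' k, S.indicator d k = p m := by
    have hvan : ∀ k ∉ Finset.range (m+1), S.indicator d k = 0 := fun k hk =>
      Set.indicator_of_notMem (s := S) (fun hkS => hk (Finset.mem_range_succ_iff.2 hkS)) d
    rw [tsum_eq_sum hvan, ← htel m]
    apply Finset.sum_congr rfl
    intro k hk
    exact Set.indicator_of_mem (s := S) (Finset.mem_range_succ_iff.1 hk) d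
  have hScind : ∑' k, Sᶜ.indicator (fun k => -d k) k = p m := by
    have hsplit : ∑' k, S.indicator d k + ∑' k, Sᶜ.indicator d k = ∑' k, d k := by
      rw [← Summable.tsum_add (hdsum.indicator S) (hdsum.indicator Sᶜ)]
      apply tsum_congr
      intro k
      exact congrFun (Set.indicator_self_add_compl S d) k
    have hcomp : ∑' k, Sᶜ.indicator d k = - p m := by
      rw [htd, hSind] at hsplit
      linarith
    calc ∑' k, Sᶜ.indicator (fun k => -d k) k
        = ∑' k, -(Sᶜ.indicator d k) := by
          apply tsum_congr
          intro k
          by_cases hk : k ∈ Sᶜ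
          · rw [Set.indicator_of_mem hk, Set.indicator_of_mem hk]
          · rw [Set.indicator_of_notMem hk, Set.indicator_of_notMem hk, neg_zero]
      _ = -∑' k, Sᶜ.indicator d k := tsum_neg
      _ = p m := by rw [hcomp, neg_neg]
  have habs : ∀ A : Set ℕ, |∑' k, A.indicator d k| ≤ p m := by
    intro A
    have hup : ∑' k, A.indicator d k ≤ p m := by
      rw [← hSind]
      apply Summable.tsum_le_tsum _ (hdsum.indicator A) (hdsum.indicator S)
      intro k
      by_cases hk : k ≤ m
      · have hdk := hsign_pos k hk
        rw [Set.indicator_of_mem (show k ∈ S from hk)]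
        by_cases hA : k ∈ A
        · rw [Set.indicator_of_mem hA]
        · rw [Set.indicator_of_notMem hA]; exact hdk
      · have hdk := hsign_neg k (not_le.1 hk)
        rw [Set.indicator_of_notMem (show k ∉ S from hk)]
        by_cases hA : k ∈ A
        · rw [Set.indicator_of_mem hA]; exact hdk
        · rw [Set.indicator_of_notMem hA]
    have hdown : -(∑' k, A.indicator d k) ≤ p m := by
      have hneg : -(∑' k, A.indicator d k) = ∑' k, A.indicator (fun k => -d k) k := by
        rw [← tsum_neg]
        apply tsum_congr
        intro k
        by_cases hA : k ∈ A
        · rw [Set.indicator_of_mem hA, Set.indicator_of_mem hA]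
        · rw [Set.indicator_of_notMem hA, Set.indicator_of_notMem hA, neg_zero]
      rw [hneg, ← hScind]
      apply Summable.tsum_le_tsum _ (hdsum.neg.indicator A) (hdsum.neg.indicator Sᶜ)
      intro k
      by_cases hk : k ≤ m
      · have hdk := hsign_pos k hk
        rw [Set.indicator_of_notMem (show k ∉ Sᶜ from fun h => h hk)]
        by_cases hA : k ∈ A
        · rw [Set.indicator_of_mem hA]; linarith
        · rw [Set.indicator_of_notMem hA]
      · have hdk := hsign_neg k (not_le.1 hk)
        rw [Set.indicator_of_mem (show k ∈ Sᶜ from hk)]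
        by_cases hA : k ∈ A
        · rw [Set.indicator_of_mem hA]
        · rw [Set.indicator_of_notMem hA]; linarith
    exact abs_le.2 ⟨by linarith, hup⟩
  -- measure identities
  have hμ : ∀ A : Set ℕ, ((P.map Z) A).toReal = ∑' k, A.indicator p k := by
    intro A
    rw [map_apply_toReal P Z hZ A]
    have he : (fun k => (P (Z ⁻¹' {k})).toReal) = p := funext hpois
    rw [he]
  have hZ1 : Measurable (fun ω => Z ω + 1) := measurable_from_top.comp hZ
  have hqval : ∀ k : ℕ, (P ((fun ω => Z ω + 1) ⁻¹' {k})).toReal = q k := by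
    intro k
    match k with
    | 0 =>
      have he : (fun ω => Z ω + 1) ⁻¹' {0} = (∅ : Set Ω) := by
        ext ω; simp
      rw [he, hq0]
      simp
    | (n+1) =>
      have he : (fun ω => Z ω + 1) ⁻¹' {n+1} = Z ⁻¹' {n} := by
        ext ω; simp
      rw [he, hpois n, hq1 n]
  have hν : ∀ A : Set ℕ, ((P.map (fun ω => Z ω + 1)) A).toReal = ∑' k, A.indicator q k := by
    intro A
    rw [map_apply_toReal P _ hZ1 A]
    have he : (fun k => (P ((fun ω => Z ω + 1) ⁻¹' {k})).toReal) = q := funext hqval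
    rw [he]
  rw [dTV]
  apply ciSup_le
  intro A
  rw [hμ A, hν A]
  have hsub : ∑' k, A.indicator p k - ∑' k, A.indicator q k = ∑' k, A.indicator d k := by
    rw [← Summable.tsum_sub (hpsum.indicator A) (hqsum.indicator A)]
    apply tsum_congr
    intro k
    by_cases hA : k ∈ A
    · rw [Set.indicator_of_mem hA, Set.indicator_of_mem hA, Set.indicator_of_mem hA]
    · rw [Set.indicator_of_notMem hA, Set.indicator_of_notMem hA,
        Set.indicator_of_notMem hA, sub_zero]
  rw [hsub]
  exact (habs A).trans (pmf_bound m hlam)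
end

section
/- If X and Y are independent ℤ₊-valued random variables, then d_TV(X+Y, X+Y+1) ≤ d_TV(X, X+1). -/
open MeasureTheory ProbabilityTheory

lemma decomp_sum {Ω : Type*} [MeasurableSpace Ω] (P : Measure Ω)
    (g Y : Ω → ℕ) (hg : Measurable g) (hY : Measurable Y)
    (h : IndepFun g Y P) (A : Set ℕ) :
    P ((fun ω => g ω + Y ω) ⁻¹' A)
      = ∑' k : ℕ, P (Y ⁻¹' {k}) * P (g ⁻¹' {n | n + k ∈ A}) := by
  have hset : (fun ω => g ω + Y ω) ⁻¹' A
      = ⋃ k : ℕ, (g ⁻¹' {n | n + k ∈ A}) ∩ (Y ⁻¹' {k}) := by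
    ext ω
    simp only [Set.mem_preimage, Set.mem_iUnion, Set.mem_inter_iff, Set.mem_setOf_eq,
      Set.mem_singleton_iff]
    exact ⟨fun hω => ⟨Y ω, hω, rfl⟩, fun ⟨k, hk, hk'⟩ => by rw [hk']; exact hk⟩
  rw [hset, measure_iUnion]
  · refine tsum_congr fun k => ?_
    rw [h.measure_inter_preimage_eq_mul _ _ (by trivial) (by trivial), mul_comm]
  · intro i j hij
    simp only [Function.onFun, Set.disjoint_left]
    rintro ω ⟨-, hi⟩ ⟨-, hj⟩
    exact hij (hi.symm.trans hj)
  · exact fun k => (hg (by trivial)).inter (hY (by trivial))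

/-- If X and Y are independent ℤ₊-valued random variables, then
d_TV(X+Y, X+Y+1) ≤ d_TV(X, X+1). -/
theorem dTV_shift_add_indep_le
    {Ω : Type*} [MeasurableSpace Ω] (P : Measure Ω) [IsProbabilityMeasure P]
    (X Y : Ω → ℕ) (hX : Measurable X) (hY : Measurable Y)
    (hindep : IndepFun X Y P) :
    dTV (P.map (fun ω => X ω + Y ω)) (P.map (fun ω => X ω + Y ω + 1)) ≤
      dTV (P.map X) (P.map (fun ω => X ω + 1)) := by
  have hX1 : Measurable fun ω => X ω + 1 := hX.add_const 1
  have hXY : Measurable fun ω => X ω + Y ω := hX.add hY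
  have hXY1 : Measurable fun ω => X ω + Y ω + 1 := hXY.add_const 1
  have hindep1 : IndepFun (fun ω => X ω + 1) Y P :=
    hindep.comp (measurable_id.add_const 1) measurable_id
  set q : ℕ → ENNReal := fun k => P (Y ⁻¹' {k}) with hq_def
  have hq1 : ∑' k, q k = 1 := by
    have := tsum_measure_preimage_singleton (μ := P) (Set.countable_univ (α := ℕ))
      (f := Y) (fun y _ => hY (by trivial))
    simp only [Set.preimage_univ, measure_univ] at this
    rw [← this]
    exact (tsum_univ fun k => P (Y ⁻¹' {k})).symm
  -- D and the bound per set
  set D := dTV (P.map X) (P.map (fun ω => X ω + 1)) with hD_def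
  have hbdd : BddAbove (Set.range fun A : Set ℕ =>
      |((P.map X) A).toReal - ((P.map (fun ω => X ω + 1)) A).toReal|) := by
    refine ⟨1, ?_⟩
    rintro x ⟨A, rfl⟩
    have h1 : ((P.map X) A).toReal ≤ 1 := by
      have : (P.map X) A ≤ 1 := by
        have : IsProbabilityMeasure (P.map X) := Measure.isProbabilityMeasure_map hX.aemeasurable
        exact prob_le_one
      exact ENNReal.toReal_le_of_le_ofReal one_pos.le (by simpa using this)
    have h2 : ((P.map (fun ω => X ω + 1)) A).toReal ≤ 1 := by
      have : (P.map (fun ω => X ω + 1)) A ≤ 1 := by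
        have : IsProbabilityMeasure (P.map (fun ω => X ω + 1)) :=
          Measure.isProbabilityMeasure_map hX1.aemeasurable
        exact prob_le_one
      exact ENNReal.toReal_le_of_le_ofReal one_pos.le (by simpa using this)
    rw [abs_sub_le_iff]
    constructor <;> nlinarith [ENNReal.toReal_nonneg (a := (P.map X) A),
      ENNReal.toReal_nonneg (a := (P.map (fun ω => X ω + 1)) A)]
  have hDk : ∀ B : Set ℕ,
      |((P.map X) B).toReal - ((P.map (fun ω => X ω + 1)) B).toReal| ≤ D :=
    fun B => le_ciSup hbdd B
  -- main bound
  refine ciSup_le fun A => ?_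
  set B : ℕ → Set ℕ := fun k => {n | n + k ∈ A} with hB_def
  have hmapXY : (P.map (fun ω => X ω + Y ω)) A = ∑' k, q k * (P.map X) (B k) := by
    rw [Measure.map_apply hXY (by trivial), decomp_sum P X Y hX hY hindep A]
    refine tsum_congr fun k => ?_
    rw [Measure.map_apply hX (by trivial)]
  have hmapXY1 : (P.map (fun ω => X ω + Y ω + 1)) A
      = ∑' k, q k * (P.map (fun ω => X ω + 1)) (B k) := by
    have heq : (fun ω => X ω + Y ω + 1) = fun ω => (X ω + 1) + Y ω := by
      funext ω; ring
    rw [heq, Measure.map_apply (show Measurable (fun ω => X ω + 1 + Y ω) from hX1.add hY) (by trivial),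
      decomp_sum P (fun ω => X ω + 1) Y hX1 hY hindep1 A]
    refine tsum_congr fun k => ?_
    rw [Measure.map_apply hX1 (by trivial)]
  -- finiteness facts
  have hfin : ∀ (μ : Measure ℕ) (_ : IsProbabilityMeasure μ),
      ∀ k, q k * μ (B k) ≠ ⊤ :=
    fun μ hμ k => ENNReal.mul_ne_top (measure_ne_top P _) (measure_ne_top μ _)
  have hsum_le : ∀ (μ : Measure ℕ) (_ : IsProbabilityMeasure μ),
      (∑' k, q k * μ (B k)) ≤ 1 := by
    intro μ hμ
    calc (∑' k, q k * μ (B k)) ≤ ∑' k, q k * 1 :=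
          ENNReal.tsum_le_tsum fun k => mul_le_mul_right prob_le_one _
      _ = 1 := by simpa using hq1
  have hPX : IsProbabilityMeasure (P.map X) := Measure.isProbabilityMeasure_map hX.aemeasurable
  have hPX1 : IsProbabilityMeasure (P.map (fun ω => X ω + 1)) :=
    Measure.isProbabilityMeasure_map hX1.aemeasurable
  -- real-valued series
  have hr : ((P.map (fun ω => X ω + Y ω)) A).toReal
      = ∑' k, (q k * (P.map X) (B k)).toReal := by
    rw [hmapXY, ENNReal.tsum_toReal_eq (hfin _ hPX)]
  have hs : ((P.map (fun ω => X ω + Y ω + 1)) A).toReal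
      = ∑' k, (q k * (P.map (fun ω => X ω + 1)) (B k)).toReal := by
    rw [hmapXY1, ENNReal.tsum_toReal_eq (hfin _ hPX1)]
  have hsumr : Summable fun k => (q k * (P.map X) (B k)).toReal :=
    ENNReal.summable_toReal (ne_top_of_le_ne_top ENNReal.one_ne_top (hsum_le _ hPX))
  have hsums : Summable fun k => (q k * (P.map (fun ω => X ω + 1)) (B k)).toReal :=
    ENNReal.summable_toReal (ne_top_of_le_ne_top ENNReal.one_ne_top (hsum_le _ hPX1))
  have hsumq : Summable fun k => (q k).toReal :=
    ENNReal.summable_toReal (by rw [hq1]; exact ENNReal.one_ne_top)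
  have hqsum1 : ∑' k, (q k).toReal = 1 := by
    rw [← ENNReal.tsum_toReal_eq (fun k => measure_ne_top P _), hq1, ENNReal.toReal_one]
  have hD0 : 0 ≤ D := le_trans (abs_nonneg _) (hDk ∅)
  have habs : ∀ k, |(q k * (P.map X) (B k)).toReal
      - (q k * (P.map (fun ω => X ω + 1)) (B k)).toReal| ≤ (q k).toReal * D := by
    intro k
    rw [ENNReal.toReal_mul, ENNReal.toReal_mul, ← mul_sub, abs_mul,
      abs_of_nonneg ENNReal.toReal_nonneg]
    exact mul_le_mul_of_nonneg_left (hDk (B k)) ENNReal.toReal_nonneg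
  calc |((P.map (fun ω => X ω + Y ω)) A).toReal
        - ((P.map (fun ω => X ω + Y ω + 1)) A).toReal|
      = |∑' k, ((q k * (P.map X) (B k)).toReal
          - (q k * (P.map (fun ω => X ω + 1)) (B k)).toReal)| := by
        rw [hr, hs, Summable.tsum_sub hsumr hsums]
    _ ≤ ∑' k, |(q k * (P.map X) (B k)).toReal
          - (q k * (P.map (fun ω => X ω + 1)) (B k)).toReal| := by
        simpa using norm_tsum_le_tsum_norm (f := fun k =>
          (q k * (P.map X) (B k)).toReal
          - (q k * (P.map (fun ω => X ω + 1)) (B k)).toReal)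
          (by simpa using (hsumr.sub hsums).abs)
    _ ≤ ∑' k, (q k).toReal * D := by
        refine Summable.tsum_le_tsum habs ?_ (hsumq.mul_right D)
        exact (hsumr.sub hsums).abs
    _ = D := by rw [tsum_mul_right, hqsum1, one_mul]
end

section
/- If X is a Poisson random variable with mean λ > 0, Y is a ℤ₊-valued random variable independent of X, and W = X + Y, then d_TV(W, W+1) ≤ 1/√(2eλ). -/
open MeasureTheory ProbabilityTheory

section AuxAnalytic

lemma lg_aux (u : ℝ) (hu0 : 0 ≤ u) (hu1 : u < 1) :
    (1+u)*Real.log (1+u) - (1-u)*Real.log (1-u) ≤ 2*u := by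
  set g : ℝ → ℝ := fun x => 2*x - (1+x)*Real.log (1+x) + (1-x)*Real.log (1-x) with hg
  have hder : ∀ x ∈ Set.Ico (0:ℝ) 1, HasDerivAt g (-Real.log (1+x) - Real.log (1-x)) x := by
    intro x hx
    obtain ⟨hx0, hx1⟩ := hx
    have h1 : (0:ℝ) < 1 + x := by linarith
    have h2 : (0:ℝ) < 1 - x := by linarith
    have hA : HasDerivAt (fun y : ℝ => 1 + y) 1 x := (hasDerivAt_id x).const_add 1
    have hB : HasDerivAt (fun y : ℝ => 1 - y) (-1) x := (hasDerivAt_id x).const_sub 1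
    have hlogA : HasDerivAt (fun y : ℝ => Real.log (1+y)) (1/(1+x)) x := hA.log h1.ne'
    have hlogB : HasDerivAt (fun y : ℝ => Real.log (1-y)) ((-1)/(1-x)) x := hB.log h2.ne'
    have h := (((hasDerivAt_id x).const_mul 2).sub (hA.mul hlogA)).add (hB.mul hlogB)
    exact h.congr_deriv (by field_simp; ring)
  have hmono : MonotoneOn g (Set.Ico (0:ℝ) 1) := by
    have hconv : Convex ℝ (Set.Ico (0:ℝ) 1) := convex_Ico 0 1
    have hint : interior (Set.Ico (0:ℝ) 1) = Set.Ioo 0 1 := interior_Ico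
    apply monotoneOn_of_deriv_nonneg hconv
    · intro x hx
      exact (hder x hx).continuousAt.continuousWithinAt
    · intro x hx
      rw [hint] at hx
      exact (hder x ⟨hx.1.le, hx.2⟩).differentiableAt.differentiableWithinAt
    · intro x hx
      rw [hint] at hx
      obtain ⟨hx0, hx1⟩ := hx
      rw [(hder x ⟨hx0.le, hx1⟩).deriv]
      have : Real.log (1+x) + Real.log (1-x) ≤ 0 := by
        rw [← Real.log_mul (by nlinarith) (by nlinarith)]
        apply Real.log_nonpos (by nlinarith) (by nlinarith)
      linarith
  have h0 : g 0 ≤ g u := hmono ⟨le_refl 0, one_pos⟩ ⟨hu0, hu1⟩ hu0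
  simp only [hg] at h0
  norm_num at h0
  linarith

lemma step_log (t : ℝ) (ht : 1 ≤ t) :
    (2*t+1)*Real.log (t+1/2) - (2*t-1)*Real.log (t-1/2) - 2*Real.log t ≤ 2 := by
  have ht0 : (0:ℝ) < t := lt_of_lt_of_le one_pos ht
  have htne : t ≠ 0 := ht0.ne'
  set u : ℝ := 1/(2*t) with hu
  have hu0 : 0 ≤ u := by positivity
  have hu1 : u < 1 := by
    rw [hu, div_lt_one (by linarith)]; linarith
  have h1 : 1 + u = (t+1/2)/t := by rw [hu]; field_simp
  have h2 : 1 - u = (t-1/2)/t := by rw [hu]; field_simp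
  have key := lg_aux u hu0 hu1
  rw [h1, h2, Real.log_div (by linarith) htne, Real.log_div (by linarith) htne] at key
  have key2 := mul_le_mul_of_nonneg_left key ht0.le
  have e1 : t*(2*u) = 1 := by rw [hu]; field_simp
  have e2 : t * ((t+1/2)/t * (Real.log (t+1/2) - Real.log t)
      - (t-1/2)/t * (Real.log (t-1/2) - Real.log t))
      = ((2*t+1)*Real.log (t+1/2) - (2*t-1)*Real.log (t-1/2) - 2*Real.log t)/2 := by
    field_simp; ring
  rw [e1, e2] at key2
  linarith

lemma step_ineq (m : ℕ) : ((m:ℝ)+3/2)^(2*m+3) ≤ ((m:ℝ)+1)^2 * Real.exp 2 * ((m:ℝ)+1/2)^(2*m+1) := by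
  have h1 : (0:ℝ) < (m:ℝ)+3/2 := by positivity
  have h2 : (0:ℝ) < (m:ℝ)+1/2 := by positivity
  have h3 : (0:ℝ) < (m:ℝ)+1 := by positivity
  have hL : (0:ℝ) < ((m:ℝ)+3/2)^(2*m+3) := by positivity
  have hR : (0:ℝ) < ((m:ℝ)+1)^2 * Real.exp 2 * ((m:ℝ)+1/2)^(2*m+1) := by positivity
  rw [← Real.log_le_log_iff hL hR, Real.log_pow,
    Real.log_mul (by positivity) (by positivity), Real.log_mul (by positivity) (Real.exp_pos 2).ne',
    Real.log_pow, Real.log_pow, Real.log_exp]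
  have hst := step_log ((m:ℝ)+1) (by linarith [Nat.cast_nonneg (α := ℝ) m])
  have e1 : (m:ℝ)+1+1/2 = (m:ℝ)+3/2 := by ring
  have e2 : (m:ℝ)+1-1/2 = (m:ℝ)+1/2 := by ring
  rw [e1, e2] at hst
  push_cast
  linarith

lemma factSq (m : ℕ) : 2*((m:ℝ)+1/2)^(2*m+1) ≤ ((m.factorial:ℝ))^2 * Real.exp (2*m) := by
  induction m with
  | zero => norm_num
  | succ m ih =>
    have A := step_ineq m
    have hpos : (0:ℝ) ≤ ((m:ℝ)+1)^2 * Real.exp 2 := by positivity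
    have B := mul_le_mul_of_nonneg_left ih hpos
    have e3 : ((m+1:ℕ).factorial:ℝ) = ((m:ℝ)+1) * (m.factorial:ℝ) := by
      rw [Nat.factorial_succ]; push_cast; ring
    have e4 : Real.exp (2*((m:ℕ)+1:ℝ)) = Real.exp 2 * Real.exp (2*m) := by
      rw [← Real.exp_add]; ring_nf
    have e5 : ((m+1:ℕ):ℝ) + 1/2 = (m:ℝ)+3/2 := by push_cast; ring
    have e6 : 2*(m+1)+1 = 2*m+3 := by ring
    rw [e5, e6, e3]
    push_cast
    calc 2*((m:ℝ)+3/2)^(2*m+3) ≤ 2*(((m:ℝ)+1)^2 * Real.exp 2 * ((m:ℝ)+1/2)^(2*m+1)) := by linarith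
    _ = ((m:ℝ)+1)^2 * Real.exp 2 * (2*((m:ℝ)+1/2)^(2*m+1)) := by ring
    _ ≤ ((m:ℝ)+1)^2 * Real.exp 2 * (((m.factorial:ℝ))^2 * Real.exp (2*m)) := B
    _ = (((m:ℝ)+1) * (m.factorial:ℝ))^2 * (Real.exp 2 * Real.exp (2*m)) := by ring
    _ = (((m:ℝ)+1) * (m.factorial:ℝ))^2 * Real.exp (2*((m:ℝ)+1)) := by rw [← Real.exp_add]; ring_nf

lemma pois_le (m : ℕ) (lam : ℝ) (hlam : 0 < lam) :
    Real.exp (-lam) * lam^m / (m.factorial:ℝ) ≤ 1 / Real.sqrt (2*Real.exp 1*lam) := by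
  have hfac : (0:ℝ) < (m.factorial:ℝ) := by exact_mod_cast m.factorial_pos
  have hc : (0:ℝ) < 2*Real.exp 1*lam := by positivity
  have hXnn : (0:ℝ) ≤ Real.exp (-lam) * lam^m / (m.factorial:ℝ) := by positivity
  rw [one_div, ← Real.sqrt_inv, Real.le_sqrt hXnn (by positivity)]
  rw [inv_eq_one_div, le_div_iff₀ hc, div_pow, div_mul_eq_mul_div, div_le_one (by positivity)]
  -- goal : (exp(-lam)*lam^m)^2 * (2*exp 1*lam) ≤ (m!)^2
  have hx : lam/((m:ℝ)+1/2) ≤ Real.exp (lam/((m:ℝ)+1/2) - 1) := by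
    have := Real.add_one_le_exp (lam/((m:ℝ)+1/2) - 1); linarith
  have hxn : (lam/((m:ℝ)+1/2))^(2*m+1) ≤ Real.exp (lam/((m:ℝ)+1/2)-1)^(2*m+1) :=
    pow_le_pow_left₀ (by positivity) hx _
  have hpow : lam^(2*m+1) ≤ ((m:ℝ)+1/2)^(2*m+1) * Real.exp (2*lam - (2*(m:ℝ)+1)) := by
    rw [div_pow, div_le_iff₀ (by positivity)] at hxn
    have hexp1 : Real.exp (lam/((m:ℝ)+1/2)-1)^(2*m+1) = Real.exp (2*lam - (2*(m:ℝ)+1)) := by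
      rw [← Real.exp_nat_mul]
      congr 1
      have hne : ((m:ℝ)+1/2) ≠ 0 := by positivity
      push_cast
      field_simp
    rw [hexp1] at hxn
    linarith [hxn]
  have hfs := factSq m
  have hexp2 : Real.exp 1 * Real.exp (-lam)^2 * Real.exp (2*lam - (2*(m:ℝ)+1)) * Real.exp (2*(m:ℝ)) = 1 := by
    rw [show Real.exp (-lam)^2 = Real.exp (-lam + -lam) by rw [Real.exp_add]; ring,
      ← Real.exp_add, ← Real.exp_add, ← Real.exp_add]
    rw [show (1 + (-lam + -lam) + (2*lam - (2*(m:ℝ)+1)) + 2*(m:ℝ)) = 0 by ring]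
    exact Real.exp_zero
  have e7 : (Real.exp (-lam)*lam^m)^2 * (2*Real.exp 1*lam) = 2*Real.exp 1*Real.exp (-lam)^2 * lam^(2*m+1) := by
    rw [show lam^(2*m+1) = (lam^m)^2 * lam by rw [← pow_mul, mul_comm m 2, pow_succ]]
    ring
  rw [e7]
  have hstep : 2*Real.exp 1*Real.exp (-lam)^2 * lam^(2*m+1)
      ≤ 2*Real.exp 1*Real.exp (-lam)^2 * (((m:ℝ)+1/2)^(2*m+1) * Real.exp (2*lam - (2*(m:ℝ)+1))) :=
    mul_le_mul_of_nonneg_left hpow (by positivity)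
  have hstep2 : 2*Real.exp 1*Real.exp (-lam)^2 * (((m:ℝ)+1/2)^(2*m+1) * Real.exp (2*lam - (2*(m:ℝ)+1)))
      ≤ ((m.factorial:ℝ))^2 := by
    have h9 := mul_le_mul_of_nonneg_left hfs
      (le_of_lt (by positivity : (0:ℝ) < Real.exp 1 * Real.exp (-lam)^2 * Real.exp (2*lam - (2*(m:ℝ)+1))))
    calc 2*Real.exp 1*Real.exp (-lam)^2 * (((m:ℝ)+1/2)^(2*m+1) * Real.exp (2*lam - (2*(m:ℝ)+1)))
        = Real.exp 1 * Real.exp (-lam)^2 * Real.exp (2*lam - (2*(m:ℝ)+1)) * (2*((m:ℝ)+1/2)^(2*m+1)) := by ring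
      _ ≤ Real.exp 1 * Real.exp (-lam)^2 * Real.exp (2*lam - (2*(m:ℝ)+1)) * (((m.factorial:ℝ))^2 * Real.exp (2*(m:ℝ))) := h9
      _ = ((m.factorial:ℝ))^2 * (Real.exp 1 * Real.exp (-lam)^2 * Real.exp (2*lam - (2*(m:ℝ)+1)) * Real.exp (2*(m:ℝ))) := by ring
      _ = ((m.factorial:ℝ))^2 := by rw [hexp2, mul_one]
  linarith

lemma telescope_sum (p : ℕ → ℝ) (m : ℕ) :
    ∑ j ∈ Finset.range (m+1), (p j - (if j = 0 then 0 else p (j-1))) = p m := by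
  induction m with
  | zero => simp
  | succ m ih =>
    rw [Finset.sum_range_succ, ih]
    simp

lemma shift_tsum_bound (p : ℕ → ℝ) (hp : Summable p) (hnn : ∀ k, 0 ≤ p k) (m : ℕ)
    (hinc : ∀ j, 1 ≤ j → j ≤ m → p (j-1) ≤ p j)
    (hdec : ∀ j, m < j → p j ≤ p (j-1))
    (B : Set ℕ) :
    |(∑' k, B.indicator p k) - ∑' k, Set.indicator {j | j+1 ∈ B} p k| ≤ p m := by
  classical
  set pp : ℕ → ℝ := fun j => if j = 0 then 0 else p (j-1) with hppdef
  have hpp : Summable pp := by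
    rw [← summable_nat_add_iff 1]
    simpa [hppdef] using hp
  set q : ℕ → ℝ := fun j => p j - pp j with hqdef
  have hq : Summable q := hp.sub hpp
  have htpp : ∑' j, pp j = ∑' j, p j := by
    rw [Summable.tsum_eq_zero_add hpp]
    simp [hppdef]
  have htq : ∑' j, q j = 0 := by
    rw [hqdef, Summable.tsum_sub hp hpp, htpp, sub_self]
  have hqpos : ∀ j, j ≤ m → 0 ≤ q j := by
    intro j hj
    rcases Nat.eq_zero_or_pos j with h0 | h0
    · simp [hqdef, hppdef, h0, hnn 0]
    · have := hinc j h0 hj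
      simp only [hqdef, hppdef]
      rw [if_neg (Nat.pos_iff_ne_zero.mp h0)]
      linarith
  have hqneg : ∀ j, m < j → q j ≤ 0 := by
    intro j hj
    have hj0 : j ≠ 0 := by omega
    have := hdec j hj
    simp only [hqdef, hppdef]
    rw [if_neg hj0]
    linarith
  -- sum of positive parts equals p m
  have hmax_eq : ∀ j, max (q j) 0 = if j ∈ Finset.range (m+1) then q j else 0 := by
    intro j
    by_cases hj : j ∈ Finset.range (m+1)
    · rw [if_pos hj, max_eq_left (hqpos j (by simpa [Nat.lt_succ_iff] using hj))]
    · rw [if_neg hj, max_eq_right (hqneg j (by simpa [Nat.lt_succ_iff] using hj))]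
  have hmax_summable : Summable (fun j => max (q j) 0) := by
    apply Summable.of_nonneg_of_le (fun j => le_max_right _ _) (fun j => max_le (le_abs_self _) (abs_nonneg _)) hq.abs
  have htmax : ∑' j, max (q j) 0 = p m := by
    rw [tsum_eq_sum (s := Finset.range (m+1)) (by
      intro b hb
      rw [hmax_eq b, if_neg hb])]
    calc ∑ j ∈ Finset.range (m+1), max (q j) 0 = ∑ j ∈ Finset.range (m+1), q j := by
          apply Finset.sum_congr rfl
          intro j hj
          rw [hmax_eq j, if_pos hj]
      _ = p m := telescope_sum p m
  have hmin_summable : Summable (fun j => min (q j) 0) := by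
    have : (fun j => min (q j) 0) = fun j => q j - max (q j) 0 := by
      funext j
      rcases le_total (q j) 0 with h | h
      · simp [min_eq_left h, max_eq_right h]
      · simp [min_eq_right h, max_eq_left h]
    rw [this]
    exact hq.sub hmax_summable
  have htmin : ∑' j, min (q j) 0 = -(p m) := by
    have e : ∀ j, min (q j) 0 = q j - max (q j) 0 := by
      intro j
      rcases le_total (q j) 0 with h | h
      · simp [min_eq_left h, max_eq_right h]
      · simp [min_eq_right h, max_eq_left h]
    calc ∑' j, min (q j) 0 = ∑' j, (q j - max (q j) 0) := by exact tsum_congr e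
      _ = (∑' j, q j) - ∑' j, max (q j) 0 := Summable.tsum_sub hq hmax_summable
      _ = -(p m) := by rw [htq, htmax]; ring
  -- second tsum as sum of indicator of pp
  have hsecond : ∑' k, Set.indicator {j | j+1 ∈ B} p k = ∑' j, B.indicator pp j := by
    rw [Summable.tsum_eq_zero_add (hpp.indicator B)]
    have h0 : B.indicator pp 0 = 0 := by
      simp [Set.indicator_apply, hppdef]
    rw [h0, zero_add]
    apply tsum_congr
    intro k
    simp [Set.indicator_apply, hppdef]
  have hdiff : (∑' k, B.indicator p k) - ∑' k, Set.indicator {j | j+1 ∈ B} p k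
      = ∑' j, B.indicator q j := by
    rw [hsecond, ← Summable.tsum_sub (hp.indicator B) (hpp.indicator B)]
    apply tsum_congr
    intro j
    by_cases hj : j ∈ B <;> simp [Set.indicator_apply, hqdef, hj]
  rw [hdiff]
  have hqind : Summable (B.indicator q) := hq.indicator B
  rw [abs_le]
  constructor
  · rw [← htmin]
    apply Summable.tsum_le_tsum _ hmin_summable hqind
    intro j
    by_cases hj : j ∈ B
    · simp [Set.indicator_of_mem hj, min_le_left]
    · simp [Set.indicator_of_notMem hj, min_le_right]
  · rw [← htmax]
    apply Summable.tsum_le_tsum _ hqind hmax_summable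
    intro j
    by_cases hj : j ∈ B
    · simp [Set.indicator_of_mem hj, le_max_left]
    · simp [Set.indicator_of_notMem hj, le_max_right]

lemma avg_bound (a a' r : ℕ → ℝ) (c : ℝ)
    (ha : ∀ n, 0 ≤ a n ∧ a n ≤ 1) (ha' : ∀ n, 0 ≤ a' n ∧ a' n ≤ 1)
    (hrnn : ∀ n, 0 ≤ r n) (hr : Summable r) (hrsum : ∑' n, r n = 1)
    (hper : ∀ n, |a n - a' n| ≤ c) :
    |(∑' n, a n * r n) - ∑' n, a' n * r n| ≤ c := by
  have hc : 0 ≤ c := le_trans (abs_nonneg _) (hper 0)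
  have hsuma : Summable (fun n => a n * r n) :=
    Summable.of_nonneg_of_le (fun n => mul_nonneg (ha n).1 (hrnn n))
      (fun n => by
        have := mul_le_of_le_one_left (hrnn n) (ha n).2
        linarith) hr
  have hsuma' : Summable (fun n => a' n * r n) :=
    Summable.of_nonneg_of_le (fun n => mul_nonneg (ha' n).1 (hrnn n))
      (fun n => by
        have := mul_le_of_le_one_left (hrnn n) (ha' n).2
        linarith) hr
  have habs : ∀ n, |a n * r n - a' n * r n| ≤ c * r n := by
    intro n
    rw [show a n * r n - a' n * r n = (a n - a' n) * r n by ring, abs_mul,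
      abs_of_nonneg (hrnn n)]
    exact mul_le_mul_of_nonneg_right (hper n) (hrnn n)
  have hnormsum : Summable (fun n => |a n * r n - a' n * r n|) :=
    Summable.of_nonneg_of_le (fun n => abs_nonneg _) habs (hr.mul_left c)
  rw [← Summable.tsum_sub hsuma hsuma']
  have hnormsum' : Summable (fun n => ‖a n * r n - a' n * r n‖) := by
    simpa only [Real.norm_eq_abs] using hnormsum
  have h1 := norm_tsum_le_tsum_norm (f := fun n => a n * r n - a' n * r n) hnormsum'
  simp only [Real.norm_eq_abs] at h1
  have h2 : ∑' n, |a n * r n - a' n * r n| ≤ ∑' n, c * r n :=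
    Summable.tsum_le_tsum habs hnormsum (hr.mul_left c)
  have h3 : ∑' n, c * r n = c := by rw [tsum_mul_left, hrsum, mul_one]
  linarith

end AuxAnalytic

/-- If X is Poisson with mean λ > 0 and Y is ℤ₊-valued independent of X,
then W = X + Y satisfies d_TV(W, W+1) ≤ 1/√(2eλ). -/
theorem poisson_plus_indep_shift_dTV_bound
    {Ω : Type*} [MeasurableSpace Ω] (P : Measure Ω) [IsProbabilityMeasure P]
    (lam : ℝ) (hlam : 0 < lam) (X Y : Ω → ℕ) (hX : Measurable X) (hY : Measurable Y)
    (hpois : ∀ k : ℕ, (P (X ⁻¹' {k})).toReal =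
      Real.exp (-lam) * lam ^ k / (Nat.factorial k))
    (hindep : IndepFun X Y P)
    (W : Ω → ℕ) (hW : W = fun ω => X ω + Y ω) :
    dTV (P.map W) (P.map (fun ω => W ω + 1)) ≤
      1 / Real.sqrt (2 * Real.exp 1 * lam) := by
  classical
  have hWmeas : Measurable W := by rw [hW]; exact hX.add hY
  have hW1meas : Measurable (fun ω => W ω + 1) := hWmeas.add_const 1
  have htr1 : ∀ s : Set Ω, (P s).toReal ≤ 1 := by
    intro s
    have := ENNReal.toReal_mono ENNReal.one_ne_top (prob_le_one (μ := P) (s := s))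
    simpa using this
  have hp : Summable (fun k => (P (X ⁻¹' {k})).toReal) := by
    have he : (fun k => (P (X ⁻¹' {k})).toReal)
        = fun k => Real.exp (-lam) * (lam ^ k / (Nat.factorial k)) := by
      funext k; rw [hpois k]; ring
    rw [he]
    exact (Real.summable_pow_div_factorial lam).mul_left _
  have hnn : ∀ k, 0 ≤ (P (X ⁻¹' {k})).toReal := fun k => ENNReal.toReal_nonneg
  have hinc : ∀ j, 1 ≤ j → j ≤ ⌊lam⌋₊ →
      (P (X ⁻¹' {j-1})).toReal ≤ (P (X ⁻¹' {j})).toReal := by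
    intro j h1 h2
    obtain ⟨i, rfl⟩ : ∃ i, j = i + 1 := ⟨j-1, (Nat.succ_pred_eq_of_pos h1).symm⟩
    have hle : ((i:ℝ)+1) ≤ lam := by
      have := (Nat.le_floor_iff hlam.le).mp h2
      push_cast at this; linarith
    simp only [Nat.add_sub_cancel]
    rw [hpois, hpois]
    have hf1 : (0:ℝ) < (Nat.factorial i : ℝ) := by exact_mod_cast i.factorial_pos
    have hf2 : (0:ℝ) < (Nat.factorial (i+1) : ℝ) := by exact_mod_cast (i+1).factorial_pos
    rw [div_le_div_iff₀ hf1 hf2]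
    have e1 : (Nat.factorial (i+1) : ℝ) = ((i:ℝ)+1) * (Nat.factorial i : ℝ) := by
      rw [Nat.factorial_succ]; push_cast; ring
    rw [e1, pow_succ]
    have hpos : (0:ℝ) ≤ Real.exp (-lam) * lam^i * (Nat.factorial i : ℝ) := by positivity
    nlinarith [mul_le_mul_of_nonneg_left hle hpos]
  have hdec : ∀ j, ⌊lam⌋₊ < j →
      (P (X ⁻¹' {j})).toReal ≤ (P (X ⁻¹' {j-1})).toReal := by
    intro j hj
    have h1 : 1 ≤ j := by omega
    obtain ⟨i, rfl⟩ : ∃ i, j = i + 1 := ⟨j-1, (Nat.succ_pred_eq_of_pos h1).symm⟩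
    have hle : lam ≤ (i:ℝ)+1 := by
      have := (Nat.floor_lt hlam.le).mp hj
      push_cast at this; linarith
    simp only [Nat.add_sub_cancel]
    rw [hpois, hpois]
    have hf1 : (0:ℝ) < (Nat.factorial i : ℝ) := by exact_mod_cast i.factorial_pos
    have hf2 : (0:ℝ) < (Nat.factorial (i+1) : ℝ) := by exact_mod_cast (i+1).factorial_pos
    rw [div_le_div_iff₀ hf2 hf1]
    have e1 : (Nat.factorial (i+1) : ℝ) = ((i:ℝ)+1) * (Nat.factorial i : ℝ) := by
      rw [Nat.factorial_succ]; push_cast; ring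
    rw [e1, pow_succ]
    have hpos : (0:ℝ) ≤ Real.exp (-lam) * lam^i * (Nat.factorial i : ℝ) := by positivity
    nlinarith [mul_le_mul_of_nonneg_left hle hpos]
  -- decomposition of the sum over values of Y
  have key : ∀ A : Set ℕ, P ((fun ω => X ω + Y ω) ⁻¹' A)
      = ∑' n, P (X ⁻¹' {k | k + n ∈ A}) * P (Y ⁻¹' {n}) := by
    intro A
    have hset : (fun ω => X ω + Y ω) ⁻¹' A
        = ⋃ n, (X ⁻¹' {k | k + n ∈ A}) ∩ (Y ⁻¹' {n}) := by
      ext ω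
      simp only [Set.mem_preimage, Set.mem_iUnion, Set.mem_inter_iff, Set.mem_setOf_eq,
        Set.mem_singleton_iff]
      constructor
      · intro h; exact ⟨Y ω, h, rfl⟩
      · rintro ⟨n, h1, rfl⟩; exact h1
    have hdisj : Pairwise (Function.onFun Disjoint
        (fun n => (X ⁻¹' {k | k + n ∈ A}) ∩ (Y ⁻¹' {n}))) := by
      intro n1 n2 hab
      apply Set.disjoint_left.mpr
      rintro ω ⟨_, ha⟩ ⟨_, hb⟩
      simp only [Set.mem_preimage, Set.mem_singleton_iff] at ha hb
      exact hab (ha ▸ hb ▸ rfl)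
    rw [hset, measure_iUnion hdisj (fun n =>
      (hX MeasurableSet.of_discrete).inter (hY MeasurableSet.of_discrete))]
    congr 1
    funext n
    exact hindep.measure_inter_preimage_eq_mul _ _ MeasurableSet.of_discrete
      MeasurableSet.of_discrete
  -- decomposition of the X-marginal
  have hXdec : ∀ B : Set ℕ, (P (X ⁻¹' B)).toReal
      = ∑' k, B.indicator (fun k => (P (X ⁻¹' {k})).toReal) k := by
    intro B
    have hset : X ⁻¹' B = ⋃ k, X ⁻¹' (B ∩ {k}) := by
      ext ω
      simp only [Set.mem_preimage, Set.mem_iUnion, Set.mem_inter_iff, Set.mem_singleton_iff]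
      constructor
      · intro h; exact ⟨X ω, h, rfl⟩
      · rintro ⟨k, h1, _⟩; exact h1
    have hdisj : Pairwise (Function.onFun Disjoint (fun k => X ⁻¹' (B ∩ {k}))) := by
      intro k1 k2 hab
      apply Set.disjoint_left.mpr
      rintro ω ⟨_, ha⟩ ⟨_, hb⟩
      simp only [Set.mem_singleton_iff] at ha hb
      exact hab (ha ▸ hb ▸ rfl)
    rw [hset, measure_iUnion hdisj (fun k => hX MeasurableSet.of_discrete),
      ENNReal.tsum_toReal_eq (fun k => measure_ne_top P _)]
    apply tsum_congr
    intro k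
    by_cases hk : k ∈ B
    · rw [Set.indicator_of_mem hk, Set.inter_eq_self_of_subset_right
        (Set.singleton_subset_iff.mpr hk)]
    · rw [Set.indicator_of_notMem hk, Set.inter_singleton_eq_empty.mpr hk]
      simp
  -- marginal of Y sums to one
  have hrENN : ∑' n, P (Y ⁻¹' {n}) = 1 := by
    rw [← measure_iUnion (fun n1 n2 hab => by
        apply Set.disjoint_left.mpr
        rintro ω ha hb
        simp only [Set.mem_preimage, Set.mem_singleton_iff] at ha hb
        exact hab (ha ▸ hb ▸ rfl))
      (fun n => hY MeasurableSet.of_discrete)]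
    have huniv : ⋃ n, Y ⁻¹' {n} = Set.univ := by
      ext ω; simp
    rw [huniv, measure_univ]
  have hr : Summable (fun n => (P (Y ⁻¹' {n})).toReal) :=
    ENNReal.summable_toReal (hrENN ▸ ENNReal.one_ne_top)
  have hrnn : ∀ n, 0 ≤ (P (Y ⁻¹' {n})).toReal := fun n => ENNReal.toReal_nonneg
  have hrsum : ∑' n, (P (Y ⁻¹' {n})).toReal = 1 := by
    rw [← ENNReal.tsum_toReal_eq (fun n => measure_ne_top P _), hrENN]
    simp
  -- the per-set bound
  have hbound : ∀ A : Set ℕ,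
      |((P.map W) A).toReal - ((P.map (fun ω => W ω + 1)) A).toReal|
        ≤ (P (X ⁻¹' {(⌊lam⌋₊ : ℕ)})).toReal := by
    intro A
    have hmapW : ((P.map W) A).toReal
        = ∑' n, (P (X ⁻¹' {k | k + n ∈ A})).toReal * (P (Y ⁻¹' {n})).toReal := by
      rw [Measure.map_apply hWmeas MeasurableSet.of_discrete, hW, key A,
        ENNReal.tsum_toReal_eq (fun n =>
          ENNReal.mul_ne_top (measure_ne_top P _) (measure_ne_top P _))]
      exact tsum_congr (fun n => ENNReal.toReal_mul)
    have hmapW1 : ((P.map (fun ω => W ω + 1)) A).toReal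
        = ∑' n, (P (X ⁻¹' {k | k + n + 1 ∈ A})).toReal * (P (Y ⁻¹' {n})).toReal := by
      rw [Measure.map_apply hW1meas MeasurableSet.of_discrete]
      have hset : (fun ω => W ω + 1) ⁻¹' A = (fun ω => X ω + Y ω) ⁻¹' {j | j + 1 ∈ A} := by
        rw [hW]; ext ω; simp
      rw [hset, key,
        ENNReal.tsum_toReal_eq (fun n =>
          ENNReal.mul_ne_top (measure_ne_top P _) (measure_ne_top P _))]
      exact tsum_congr (fun n => by
        rw [ENNReal.toReal_mul,
          show {k | k + n ∈ {j | j + 1 ∈ A}} = {k | k + n + 1 ∈ A} from rfl])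
    rw [hmapW, hmapW1]
    apply avg_bound _ _ _ _
      (fun n => ⟨ENNReal.toReal_nonneg, htr1 _⟩)
      (fun n => ⟨ENNReal.toReal_nonneg, htr1 _⟩)
      hrnn hr hrsum
    intro n
    have e1 : (P (X ⁻¹' {k | k + n ∈ A})).toReal
        = ∑' k, Set.indicator {k | k + n ∈ A} (fun k => (P (X ⁻¹' {k})).toReal) k := hXdec _
    have e2 : (P (X ⁻¹' {k | k + n + 1 ∈ A})).toReal
        = ∑' k, Set.indicator {j | j + 1 ∈ {k | k + n ∈ A}}
            (fun k => (P (X ⁻¹' {k})).toReal) k := by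
      have hss : {k | k + n + 1 ∈ A} = {j | j + 1 ∈ {k | k + n ∈ A}} := by
        ext k
        simp only [Set.mem_setOf_eq]
        rw [Nat.add_right_comm k 1 n]
      rw [hss]
      exact hXdec _
    rw [e1, e2]
    exact shift_tsum_bound _ hp hnn ⌊lam⌋₊ hinc hdec _
  -- conclude
  have hfinal : (P (X ⁻¹' {(⌊lam⌋₊ : ℕ)})).toReal ≤ 1 / Real.sqrt (2 * Real.exp 1 * lam) := by
    rw [hpois]
    exact pois_le ⌊lam⌋₊ lam hlam
  rw [dTV]
  apply Real.iSup_le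
  · intro A
    exact le_trans (hbound A) hfinal
  · positivity
end
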